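/- Let A₁, A₂ ∈ ℝ^{n×n} be non-singular matrices with the same support (i.e., (A₁)_{i,j} ≠ 0 ⟺ (A₂)_{i,j} ≠ 0 for all i,j), such that A₁·A₁ᵀ = A₂·A₂ᵀ, and suppose there exist permutation matrices P₁, P₂ with P₁ᵀ·A₁·P₂ lower triangular. Then A₁ = A₂·D for some diagonal matrix D with diagonal entries ±1. -/

import Mathlib

open Matrix

lemma permMatrix_transpose {n : Type*} [DecidableEq n] (σ : Equiv.Perm n) :
    (σ.permMatrix ℝ).transpose = (σ⁻¹).permMatrix ℝ := by
  ext i j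
  simp only [transpose_apply, Equiv.Perm.permMatrix, PEquiv.toMatrix_apply,
    Equiv.toPEquiv_apply, Option.mem_def, Option.some.injEq]
  rcases eq_or_ne (σ j) i with h | h
  · subst h; simp
  · rw [if_neg h, if_neg fun hc => h (by rw [← hc]; simp)]

theorem stmt_6 (n : ℕ) (A₁ A₂ : Matrix (Fin n) (Fin n) ℝ)
    (h₁ : A₁.det ≠ 0) (h₂ : A₂.det ≠ 0)
    (hsupp : ∀ i j, A₁ i j ≠ 0 ↔ A₂ i j ≠ 0)
    (hcov : A₁ * A₁.transpose = A₂ * A₂.transpose)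
    (σ₁ σ₂ : Equiv.Perm (Fin n))
    (hlt : ∀ i j : Fin n, i < j →
      ((σ₁.permMatrix ℝ).transpose * A₁ * σ₂.permMatrix ℝ) i j = 0) :
    ∃ d : Fin n → ℝ, (∀ i, d i = 1 ∨ d i = -1) ∧ A₁ = A₂ * Matrix.diagonal d := by
  have e₁ : Fin n ≃ Fin n := σ₁.symm
  set C₁ := A₁.submatrix ⇑σ₁.symm ⇑σ₂.symm with hC₁
  set C₂ := A₂.submatrix ⇑σ₁.symm ⇑σ₂.symm with hC₂
  have hB : (σ₁.permMatrix ℝ).transpose * A₁ * σ₂.permMatrix ℝ = C₁ := by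
    rw [permMatrix_transpose, show (σ₁⁻¹).permMatrix ℝ = (σ₁⁻¹).toPEquiv.toMatrix from rfl,
      PEquiv.toMatrix_toPEquiv_mul, show σ₂.permMatrix ℝ = σ₂.toPEquiv.toMatrix from rfl,
      PEquiv.mul_toMatrix_toPEquiv, submatrix_submatrix]
    rfl
  have htri₁ : ∀ i j : Fin n, i < j → C₁ i j = 0 := by
    intro i j hij; rw [← hB]; exact hlt i j hij
  have htri₂ : ∀ i j : Fin n, i < j → C₂ i j = 0 := by
    intro i j hij
    by_contra h
    exact ((hsupp _ _).mpr h) (htri₁ i j hij)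
  have dC₁ : C₁.det ≠ 0 := by
    intro h
    have := abs_det_submatrix_equiv_equiv σ₁.symm σ₂.symm A₁
    rw [← hC₁, h, abs_zero] at this
    exact h₁ (abs_eq_zero.mp this.symm)
  have dC₂ : C₂.det ≠ 0 := by
    intro h
    have := abs_det_submatrix_equiv_equiv σ₁.symm σ₂.symm A₂
    rw [← hC₂, h, abs_zero] at this
    exact h₂ (abs_eq_zero.mp this.symm)
  have hu₁ : IsUnit C₁.det := isUnit_iff_ne_zero.mpr dC₁
  have hu₂ : IsUnit C₂.det := isUnit_iff_ne_zero.mpr dC₂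
  have hut₁ : IsUnit C₁.transpose.det := by rwa [det_transpose]
  have hut₂ : IsUnit C₂.transpose.det := by rwa [det_transpose]
  have hcovC : C₁ * C₁.transpose = C₂ * C₂.transpose := by
    rw [hC₁, hC₂, transpose_submatrix, transpose_submatrix,
      submatrix_mul_equiv, submatrix_mul_equiv, hcov]
  have hU₁tri : C₁.transpose.BlockTriangular id := fun i j hij => htri₁ j i hij
  have hU₂tri : C₂.transpose.BlockTriangular id := fun i j hij => htri₂ j i hij
  have iU₁ : Invertible C₁.transpose := invertibleOfIsUnitDet _ hut₁
  have iU₂ : Invertible C₂.transpose := invertibleOfIsUnitDet _ hut₂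
  set D := C₁.transpose * (C₂.transpose)⁻¹ with hDdef
  have hDalt : D = C₁⁻¹ * C₂ := by
    have h1 : C₁⁻¹ * (C₁ * C₁.transpose) * (C₂.transpose)⁻¹ = D := by
      rw [← Matrix.mul_assoc, Matrix.nonsing_inv_mul _ hu₁, Matrix.one_mul, hDdef]
    have h2 : C₁⁻¹ * (C₂ * C₂.transpose) * (C₂.transpose)⁻¹ = C₁⁻¹ * C₂ := by
      rw [Matrix.mul_assoc C₁⁻¹, Matrix.mul_assoc C₂, Matrix.mul_nonsing_inv _ hut₂,
        Matrix.mul_one]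
    rw [← h1, hcovC, h2]
  have hDupper : D.BlockTriangular id :=
    hU₁tri.mul (blockTriangular_inv_of_blockTriangular hU₂tri)
  have hDTupper : D.transpose.BlockTriangular id := by
    have hDT : D.transpose = C₂.transpose * (C₁.transpose)⁻¹ := by
      rw [hDalt, transpose_mul, transpose_nonsing_inv]
    rw [hDT]
    exact hU₂tri.mul (blockTriangular_inv_of_blockTriangular hU₁tri)
  set d : Fin n → ℝ := fun i => D i i with hd
  have hDdiag : D = Matrix.diagonal d := by
    ext i j
    rcases lt_trichotomy i j with h | h | h
    · have h0 : D.transpose j i = 0 := hDTupper h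
      rw [transpose_apply] at h0
      rw [h0, Matrix.diagonal_apply_ne _ (ne_of_lt h)]
    · subst h; rw [Matrix.diagonal_apply_eq]
    · rw [hDupper h, Matrix.diagonal_apply_ne _ (ne_of_gt h)]
  have hCeq : C₁ = C₂ * Matrix.diagonal d := by
    have hU₁eq : C₁.transpose = D * C₂.transpose := by
      rw [hDdef, Matrix.mul_assoc, Matrix.nonsing_inv_mul _ hut₂, Matrix.mul_one]
    have : C₁ = (D * C₂.transpose).transpose := by rw [← hU₁eq, transpose_transpose]
    rw [this, transpose_mul, transpose_transpose, hDdiag, diagonal_transpose]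
  -- diagonal entries square to one
  have key : C₂ * (Matrix.diagonal d * Matrix.diagonal d) * C₂.transpose
      = C₂ * C₂.transpose := by
    have hc := hcovC
    rw [hCeq, transpose_mul, diagonal_transpose] at hc
    rw [← hc]
    noncomm_ring
  have h4 : C₂⁻¹ * (C₂ * (Matrix.diagonal d * Matrix.diagonal d) * C₂.transpose)
      = C₂⁻¹ * (C₂ * C₂.transpose) := by rw [key]
  rw [← Matrix.mul_assoc C₂⁻¹ C₂, ← Matrix.mul_assoc C₂⁻¹,
    ← Matrix.mul_assoc C₂⁻¹ C₂, Matrix.nonsing_inv_mul _ hu₂, Matrix.one_mul,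
    Matrix.one_mul] at h4
  have h5 : Matrix.diagonal d * Matrix.diagonal d = 1 := by
    have h6 := congrArg (fun X => X * (C₂.transpose)⁻¹) h4
    simp only [Matrix.mul_assoc, Matrix.mul_nonsing_inv _ hut₂, Matrix.mul_one] at h6
    exact h6
  have hdpm : ∀ i, d i * d i = 1 := by
    intro i
    have h7 := congrFun (congrFun h5 i) i
    simpa [Matrix.diagonal_mul_diagonal, Matrix.diagonal_apply_eq, Matrix.one_apply_eq] using h7
  refine ⟨d ∘ σ₂, fun i => mul_self_eq_one_iff.mp (hdpm (σ₂ i)), ?_⟩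
  ext a b
  have h8 := congrFun (congrFun hCeq (σ₁ a)) (σ₂ b)
  rw [Matrix.mul_diagonal] at h8
  simp only [hC₁, hC₂, submatrix_apply, Equiv.symm_apply_apply] at h8
  rw [Matrix.mul_diagonal]
  simpa using h8
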